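/- arXiv:1801.07547 — 2 statements merged into one kernel-verified Lean document; each statement's English description precedes it below -/
import Mathlib

section
/- Fix positive integers d and q. Suppose that for every finite d-regular graph G and every β > 0 one has U^q_G(β) ≥ U^q_{K_{d,d}}(β). Then for every finite d-regular graph G, (1/|V(G)|) log c^q(G) ≤ (1/(2d)) log c^q(K_{d,d}), where c^q(H) denotes the number of proper q-colourings of H and K_{d,d} is the complete bipartite graph with parts of size d. -/
noncomputable section

/-- The number of monochromatic edges of `G` under the `q`-colouring `σ`. -/
def monoEdges {V : Type*} (G : SimpleGraph V) {q : ℕ} (σ : V → Fin q) : ℕ :=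
  {e ∈ G.edgeSet | ∃ u v, e = s(u, v) ∧ σ u = σ v}.ncard

/-- The `q`-state Potts model partition function at inverse temperature `β`. -/
def pottsZ {V : Type*} [Fintype V] [DecidableEq V] (G : SimpleGraph V) (q : ℕ) (β : ℝ) : ℝ :=
  ∑ σ : V → Fin q, Real.exp (-β * (monoEdges G σ : ℝ))

/-- The internal energy per particle of the `q`-state Potts model. -/
def pottsU {V : Type*} [Fintype V] [DecidableEq V] (G : SimpleGraph V) (q : ℕ) (β : ℝ) : ℝ :=
  (1 / (Fintype.card V : ℝ)) *
    (∑ σ : V → Fin q, (monoEdges G σ : ℝ) * Real.exp (-β * (monoEdges G σ : ℝ))) / pottsZ G q β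

/-- The free energy per particle of the `q`-state Potts model. -/
def pottsF {V : Type*} [Fintype V] [DecidableEq V] (G : SimpleGraph V) (q : ℕ) (β : ℝ) : ℝ :=
  (1 / (Fintype.card V : ℝ)) * Real.log (pottsZ G q β)

/-- The number of proper `q`-colourings of `G`. -/
def properCount {V : Type*} [Fintype V] [DecidableEq V] (G : SimpleGraph V) (q : ℕ) : ℕ :=
  {σ : V → Fin q | ∀ u v, G.Adj u v → σ u ≠ σ v}.ncard


open Real Filter

set_option linter.unusedSectionVars false

section helpers

variable {V : Type*} [Fintype V] [DecidableEq V] {q : ℕ}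

lemma monoEdges_eq_zero {G : SimpleGraph V} {σ : V → Fin q}
    (hσ : ∀ u v, G.Adj u v → σ u ≠ σ v) : monoEdges G σ = 0 := by
  rw [monoEdges, Set.ncard_eq_zero (Set.toFinite _)]
  ext e
  simp only [Set.mem_setOf_eq, Set.mem_empty_iff_false, iff_false]
  rintro ⟨he, u, v, rfl, huv⟩
  exact hσ u v (G.mem_edgeSet.mp he) huv

lemma monoEdges_pos {G : SimpleGraph V} {σ : V → Fin q} {u v : V}
    (huv : G.Adj u v) (hc : σ u = σ v) : 0 < monoEdges G σ := by
  rw [monoEdges, Set.ncard_pos (Set.toFinite _)]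
  exact ⟨s(u, v), G.mem_edgeSet.mpr huv, u, v, rfl, hc⟩

lemma pottsZ_pos (hq : 0 < q) (G : SimpleGraph V) (β : ℝ) : 0 < pottsZ G q β := by
  haveI : Nonempty (Fin q) := ⟨⟨0, hq⟩⟩
  exact Finset.sum_pos (fun _ _ => Real.exp_pos _) Finset.univ_nonempty

open Classical in
lemma properCount_eq (G : SimpleGraph V) (q : ℕ) :
    properCount G q
      = (Finset.univ.filter fun σ : V → Fin q => ∀ u v, G.Adj u v → σ u ≠ σ v).card := by
  rw [properCount, Set.ncard_eq_toFinset_card', Set.toFinset_setOf]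

lemma properCount_le_pottsZ (G : SimpleGraph V) (q : ℕ) (β : ℝ) :
    (properCount G q : ℝ) ≤ pottsZ G q β := by
  classical
  rw [properCount_eq]
  have h1 : ((Finset.univ.filter fun σ : V → Fin q =>
      ∀ u v, G.Adj u v → σ u ≠ σ v).card : ℝ)
      = ∑ σ ∈ (Finset.univ.filter fun σ : V → Fin q => ∀ u v, G.Adj u v → σ u ≠ σ v),
          Real.exp (-β * (monoEdges G σ : ℝ)) := by
    rw [Finset.sum_congr rfl fun σ hσ => by
      rw [monoEdges_eq_zero (Finset.mem_filter.mp hσ).2]]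
    simp
  rw [h1]
  exact Finset.sum_le_sum_of_subset_of_nonneg (Finset.filter_subset _ _)
    (fun _ _ _ => (Real.exp_pos _).le)

lemma pottsZ_le_add (G : SimpleGraph V) (q : ℕ) {β : ℝ} (hβ : 0 ≤ β) :
    pottsZ G q β ≤ (properCount G q : ℝ)
      + (Fintype.card (V → Fin q) : ℝ) * Real.exp (-β) := by
  classical
  rw [pottsZ, ← Finset.sum_filter_add_sum_filter_not Finset.univ
    (fun σ : V → Fin q => ∀ u v, G.Adj u v → σ u ≠ σ v)]
  have h1 : ∑ σ ∈ (Finset.univ.filter fun σ : V → Fin q => ∀ u v, G.Adj u v → σ u ≠ σ v),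
      Real.exp (-β * (monoEdges G σ : ℝ)) = (properCount G q : ℝ) := by
    rw [properCount_eq, Finset.sum_congr rfl fun σ hσ => by
      rw [monoEdges_eq_zero (Finset.mem_filter.mp hσ).2]]
    simp
  rw [h1]
  gcongr
  calc ∑ σ ∈ (Finset.univ.filter fun σ : V → Fin q =>
        ¬ ∀ u v, G.Adj u v → σ u ≠ σ v), Real.exp (-β * (monoEdges G σ : ℝ))
      ≤ ∑ _σ ∈ (Finset.univ.filter fun σ : V → Fin q =>
        ¬ ∀ u v, G.Adj u v → σ u ≠ σ v), Real.exp (-β) := by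
        apply Finset.sum_le_sum
        intro σ hσ
        apply Real.exp_le_exp.mpr
        have hσ' := (Finset.mem_filter.mp hσ).2
        push_neg at hσ'
        obtain ⟨u, v, huv, hc⟩ := hσ'
        have hm : (1 : ℝ) ≤ (monoEdges G σ : ℝ) := by
          exact_mod_cast monoEdges_pos huv hc
        nlinarith
    _ ≤ (Fintype.card (V → Fin q) : ℝ) * Real.exp (-β) := by
        rw [Finset.sum_const, nsmul_eq_mul]
        have hc : (((Finset.univ.filter fun σ : V → Fin q =>
            ¬ ∀ u v, G.Adj u v → σ u ≠ σ v)).card : ℝ)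
            ≤ (Fintype.card (V → Fin q) : ℝ) := by
          exact_mod_cast Finset.card_filter_le _ _
        exact mul_le_mul_of_nonneg_right hc (Real.exp_pos _).le

lemma pottsZ_zero (G : SimpleGraph V) (q : ℕ) :
    pottsZ G q 0 = (q : ℝ) ^ Fintype.card V := by
  have : pottsZ G q 0 = (Fintype.card (V → Fin q) : ℝ) := by
    simp [pottsZ]
  rw [this, Fintype.card_fun, Fintype.card_fin]
  push_cast
  ring

lemma hasDerivAt_pottsZ (G : SimpleGraph V) (q : ℕ) (β : ℝ) :
    HasDerivAt (pottsZ G q)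
      (-∑ σ : V → Fin q, (monoEdges G σ : ℝ) * Real.exp (-β * (monoEdges G σ : ℝ))) β := by
  have h : ∀ σ ∈ (Finset.univ : Finset (V → Fin q)),
      HasDerivAt (fun b : ℝ => Real.exp (-b * (monoEdges G σ : ℝ)))
        (-((monoEdges G σ : ℝ) * Real.exp (-β * (monoEdges G σ : ℝ)))) β := by
    intro σ _
    have h1 : HasDerivAt (fun b : ℝ => -b * (monoEdges G σ : ℝ))
        (-(monoEdges G σ : ℝ)) β := by
      simpa using (hasDerivAt_id β).neg.mul_const ((monoEdges G σ : ℝ))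
    simpa [neg_mul, mul_comm] using h1.exp
  have h2 := HasDerivAt.fun_sum h
  have e : ∑ σ : V → Fin q, -((monoEdges G σ : ℝ) * Real.exp (-β * (monoEdges G σ : ℝ)))
      = -∑ σ : V → Fin q, (monoEdges G σ : ℝ) * Real.exp (-β * (monoEdges G σ : ℝ)) :=
    Finset.sum_neg_distrib _
  rw [e] at h2
  exact h2

end helpers

/-- `G` is `d`-regular: every vertex has exactly `d` neighbours. -/
def IsRegularGraph {V : Type*} (G : SimpleGraph V) (d : ℕ) : Prop :=
  ∀ v, (G.neighborSet v).ncard = d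

/-- The complete bipartite graph with two parts of size `d`. -/
def Kdd (d : ℕ) : SimpleGraph (Fin d ⊕ Fin d) := completeBipartiteGraph (Fin d) (Fin d)


lemma one_le_properCount_Kdd {d q : ℕ} {a b : Fin q} (hab : a ≠ b) :
    1 ≤ properCount (Kdd d) q := by
  have hne : ({σ : Fin d ⊕ Fin d → Fin q |
      ∀ u v, (Kdd d).Adj u v → σ u ≠ σ v}).Nonempty := by
    refine ⟨Sum.elim (fun _ => a) (fun _ => b), ?_⟩
    rintro (u | u) (v | v) hadj
    · simp [Kdd, completeBipartiteGraph] at hadj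
    · simpa using hab
    · simpa using hab.symm
    · simp [Kdd, completeBipartiteGraph] at hadj
  have : 0 < ({σ : Fin d ⊕ Fin d → Fin q |
      ∀ u v, (Kdd d).Adj u v → σ u ≠ σ v}).ncard :=
    (Set.ncard_pos (Set.toFinite _)).mpr hne
  exact this

/-- The complete bipartite graph `K_{4,4}`. -/
def K44 : SimpleGraph (Fin 4 ⊕ Fin 4) := completeBipartiteGraph (Fin 4) (Fin 4)

/-- The complete graph `K_5`. -/
def K5 : SimpleGraph (Fin 5) := SimpleGraph.completeGraph (Fin 5)

/-- The disjoint union of `k` copies of a graph `H`. -/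
def disjointCopies {W : Type*} (k : ℕ) (H : SimpleGraph W) : SimpleGraph (Fin k × W) where
  Adj a b := a.1 = b.1 ∧ H.Adj a.2 b.2
  symm := ⟨fun _ _ ⟨h1, h2⟩ => ⟨h1.symm, h2.symm⟩⟩
  loopless := ⟨fun a ⟨_, h2⟩ => H.loopless.irrefl a.2 h2⟩

theorem stmt6 (d q : ℕ) (hd : 0 < d) (hq : 0 < q)
    (h : ∀ (V : Type) [Fintype V] [DecidableEq V] [Nonempty V] (G : SimpleGraph V),
      IsRegularGraph G d → ∀ β : ℝ, 0 < β → pottsU (Kdd d) q β ≤ pottsU G q β)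
    (V : Type) [Fintype V] [DecidableEq V] [Nonempty V] (G : SimpleGraph V)
    (hG : IsRegularGraph G d) :
    (1 / (Fintype.card V : ℝ)) * Real.log (properCount G q) ≤
      (1 / (2 * d : ℝ)) * Real.log (properCount (Kdd d) q) := by
  classical
  rcases Nat.eq_zero_or_pos (properCount G q) with hc | hc
  · rw [hc]
    simp only [Nat.cast_zero, Real.log_zero, mul_zero]
    rcases Nat.eq_zero_or_pos (properCount (Kdd d) q) with hk | hk
    · rw [hk]; simp
    · have h1 : (0:ℝ) ≤ Real.log (properCount (Kdd d) q : ℝ) :=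
        Real.log_nonneg (by exact_mod_cast hk)
      have h2 : (0:ℝ) ≤ 1 / (2*(d:ℝ)) := by positivity
      have h2d : (1:ℝ) / (2 * (d:ℕ) : ℝ) = 1 / (2*(d:ℝ)) := by push_cast; ring
      rw [h2d]
      exact mul_nonneg h2 h1
  · have hcG : (1:ℝ) ≤ (properCount G q : ℝ) := by exact_mod_cast hc
    obtain ⟨v⟩ := ‹Nonempty V›
    have hnb : (G.neighborSet v).Nonempty :=
      (Set.ncard_pos (Set.toFinite _)).mp (by rw [hG v]; exact hd)
    obtain ⟨u, hu⟩ := hnb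
    have hadj : G.Adj v u := hu
    have hc' : 0 < ({σ : V → Fin q | ∀ u v, G.Adj u v → σ u ≠ σ v}).ncard := hc
    obtain ⟨σ0, hσ0⟩ := (Set.ncard_pos (Set.toFinite _)).mp hc'
    have hab : σ0 v ≠ σ0 u := hσ0 v u hadj
    have hcK1 : 1 ≤ properCount (Kdd d) q := one_le_properCount_Kdd hab
    have hcK : (1:ℝ) ≤ (properCount (Kdd d) q : ℝ) := by exact_mod_cast hcK1
    have hn0 : (0:ℝ) < (Fintype.card V : ℝ) := by exact_mod_cast Fintype.card_pos
    have h2d : (0:ℝ) < 2*(d:ℝ) := by positivity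
    have hcard2d : ((Fintype.card (Fin d ⊕ Fin d)) : ℝ) = 2*(d:ℝ) := by
      simp [Fintype.card_sum]; ring
    have hZG : ∀ β : ℝ, 0 < pottsZ G q β := fun β => pottsZ_pos hq G β
    have hZK : ∀ β : ℝ, 0 < pottsZ (Kdd d) q β := fun β => pottsZ_pos hq (Kdd d) β
    set φ : ℝ → ℝ := fun β => 1/(2*(d:ℝ)) * Real.log (pottsZ (Kdd d) q β)
      - 1/(Fintype.card V : ℝ) * Real.log (pottsZ G q β) with hφdef
    have hder : ∀ β : ℝ, HasDerivAt φ (pottsU G q β - pottsU (Kdd d) q β) β := by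
      intro β
      have h1 := HasDerivAt.const_mul (1/(2*(d:ℝ)))
        ((hasDerivAt_pottsZ (Kdd d) q β).log (hZK β).ne')
      have h2 := HasDerivAt.const_mul (1/(Fintype.card V : ℝ))
        ((hasDerivAt_pottsZ G q β).log (hZG β).ne')
      have h3 := h1.sub h2
      rw [hφdef]
      refine h3.congr_deriv ?_
      unfold pottsU
      rw [hcard2d]
      field_simp
      simp only [mul_comm β]
      ring
    have hmono : MonotoneOn φ (Set.Ici (0:ℝ)) := by
      apply monotoneOn_of_deriv_nonneg (convex_Ici 0)
      · exact fun x _ => (hder x).differentiableAt.continuousAt.continuousWithinAt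
      · exact fun x _ => (hder x).differentiableAt.differentiableWithinAt
      · intro x hx
        rw [interior_Ici] at hx
        rw [(hder x).deriv]
        have hU := h V G hG x hx
        linarith
    have hφ0 : φ 0 = 0 := by
      rw [hφdef]
      simp only
      rw [pottsZ_zero, pottsZ_zero, Real.log_pow, Real.log_pow, hcard2d]
      field_simp
      ring
    have hkey : ∀ β : ℝ, 0 ≤ β →
        1/(Fintype.card V : ℝ) * Real.log (pottsZ G q β)
          ≤ 1/(2*(d:ℝ)) * Real.log (pottsZ (Kdd d) q β) := by
      intro β hβ
      have hm := hmono Set.self_mem_Ici (Set.mem_Ici.mpr hβ) hβ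
      rw [hφ0, hφdef] at hm
      simp only at hm
      linarith
    set K : ℝ := (Fintype.card (Fin d ⊕ Fin d → Fin q) : ℝ) with hK
    have hK0 : 0 ≤ K := by positivity
    have hbound : ∀ β : ℝ, 0 < β →
        1/(Fintype.card V : ℝ) * Real.log (properCount G q : ℝ)
          ≤ 1/(2*(d:ℝ)) * (Real.log (properCount (Kdd d) q : ℝ) + K * Real.exp (-β)) := by
      intro β hβ
      have step1 : Real.log (properCount G q : ℝ) ≤ Real.log (pottsZ G q β) :=
        Real.log_le_log (by linarith) (properCount_le_pottsZ G q β)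
      have step2 := hkey β hβ.le
      have hZle := pottsZ_le_add (Kdd d) q hβ.le
      have step3 : Real.log (pottsZ (Kdd d) q β)
          ≤ Real.log ((properCount (Kdd d) q : ℝ) + K * Real.exp (-β)) :=
        Real.log_le_log (hZK β) hZle
      have step4 : Real.log ((properCount (Kdd d) q : ℝ) + K * Real.exp (-β))
          ≤ Real.log (properCount (Kdd d) q : ℝ) + K * Real.exp (-β) := by
        set c : ℝ := (properCount (Kdd d) q : ℝ) with hcdef
        set t : ℝ := K * Real.exp (-β) with ht
        have hc1 : (1:ℝ) ≤ c := hcK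
        have ht0 : 0 ≤ t := by
          rw [ht]; positivity
        have hc0 : (0:ℝ) < c := by linarith
        have hlog : Real.log (c + t) - Real.log c = Real.log ((c + t)/c) :=
          (Real.log_div (by positivity) (by positivity)).symm
        have h5 := Real.log_le_sub_one_of_pos (show (0:ℝ) < (c+t)/c by positivity)
        have h6 : (c+t)/c - 1 = t/c := by field_simp; ring
        have h7 : t/c ≤ t := by
          rw [div_le_iff₀ hc0]
          nlinarith
        linarith
      have hmulnn : (0:ℝ) ≤ 1/(2*(d:ℝ)) := by positivity
      calc 1/(Fintype.card V : ℝ) * Real.log (properCount G q : ℝ)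
          ≤ 1/(Fintype.card V : ℝ) * Real.log (pottsZ G q β) :=
            mul_le_mul_of_nonneg_left step1 (by positivity)
        _ ≤ 1/(2*(d:ℝ)) * Real.log (pottsZ (Kdd d) q β) := step2
        _ ≤ _ := mul_le_mul_of_nonneg_left (step3.trans step4) hmulnn
    have htend : Filter.Tendsto (fun β : ℝ => 1/(2*(d:ℝ)) *
        (Real.log (properCount (Kdd d) q : ℝ) + K * Real.exp (-β))) Filter.atTop
        (nhds (1/(2*(d:ℝ)) * (Real.log (properCount (Kdd d) q : ℝ) + K * 0))) := by
      apply Filter.Tendsto.const_mul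
      exact tendsto_const_nhds.add (Real.tendsto_exp_neg_atTop_nhds_zero.const_mul K)
    rw [mul_zero, add_zero] at htend
    have hfin := ge_of_tendsto htend
      (Filter.eventually_atTop.mpr ⟨1, fun β hβ => hbound β (by linarith)⟩)
    have hcast : (1:ℝ) / (2 * (d:ℕ) : ℝ) = 1 / (2*(d:ℝ)) := by push_cast; ring
    rw [hcast]
    exact hfin
end
end

section
/- Let G be a finite 4-regular graph on n vertices and let q ≥ 5 be an integer. Then (1/n) log c^q(G) ≥ (1/5) log c^q(K_5), where c^q(H) denotes the number of proper q-colourings of H and K_5 is the complete graph on 5 vertices. Equivalently, c^q(G) ≥ c^q(K_5)^{n/5}. -/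
noncomputable section

-- aux development
section Aux
open Finset

variable {V : Type*} [Fintype V] [DecidableEq V]

/-- proper colourings as a Finset (classical decidability) -/
def properFinset (G : SimpleGraph V) (q : ℕ) : Finset (V → Fin q) :=
  @Finset.filter _ (fun σ => ∀ u v, G.Adj u v → σ u ≠ σ v) (fun _ => Classical.dec _)
    Finset.univ

lemma mem_properFinset {G : SimpleGraph V} {q : ℕ} {σ : V → Fin q} :
    σ ∈ properFinset G q ↔ ∀ u v, G.Adj u v → σ u ≠ σ v := by
  simp [properFinset]

/-- neighbours as a Finset (classical decidability) -/
def nbr (G : SimpleGraph V) (v : V) : Finset V :=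
  @Finset.filter _ (fun u => G.Adj v u) (fun _ => Classical.dec _) Finset.univ

lemma mem_nbr {G : SimpleGraph V} {v u : V} : u ∈ nbr G v ↔ G.Adj v u := by
  simp [nbr]

/-- back-degree of `v` w.r.t. ordering `f` -/
def backDeg (G : SimpleGraph V) {n : ℕ} (f : V ≃ Fin n) (v : V) : ℕ :=
  ((nbr G v).filter (fun u => f u < f v)).card

/-- colourings proper on the first `k` vertices -/
def Sk (G : SimpleGraph V) (q : ℕ) {n : ℕ} (f : V ≃ Fin n) (k : ℕ) : Finset (V → Fin q) :=
  @Finset.filter _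
    (fun σ => ∀ u w, G.Adj u w → (f u).val < k → (f w).val < k → σ u ≠ σ w)
    (fun _ => Classical.dec _) Finset.univ

lemma mem_Sk {G : SimpleGraph V} {q n : ℕ} {f : V ≃ Fin n} {k : ℕ} {σ : V → Fin q} :
    σ ∈ Sk G q f k ↔ ∀ u w, G.Adj u w → (f u).val < k → (f w).val < k → σ u ≠ σ w := by
  simp [Sk]

set_option linter.unusedSectionVars false

section step
variable {G : SimpleGraph V} {q n : ℕ} {f : V ≃ Fin n}

lemma update_mem_Sk {k : ℕ} {hk : k < n} {σ : V → Fin q}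
    (hσ : σ ∈ Sk G q f k) (c : Fin q) :
    Function.update σ (f.symm ⟨k, hk⟩) c ∈ Sk G q f k := by
  rw [mem_Sk] at hσ ⊢
  intro u w ha hu hw
  set v := f.symm ⟨k, hk⟩ with hv
  have huv : u ≠ v := by
    intro h; rw [h] at hu; simp [hv] at hu
  have hwv : w ≠ v := by
    intro h; rw [h] at hw; simp [hv] at hw
  rw [Function.update_of_ne huv, Function.update_of_ne hwv]
  exact hσ u w ha hu hw

lemma mem_Sk_succ {k : ℕ} {hk : k < n} {σ : V → Fin q} :
    σ ∈ Sk G q f (k + 1) ↔ σ ∈ Sk G q f k ∧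
      ∀ u, G.Adj u (f.symm ⟨k, hk⟩) → (f u).val < k → σ u ≠ σ (f.symm ⟨k, hk⟩) := by
  set v := f.symm ⟨k, hk⟩ with hv
  have hfv : (f v).val = k := by simp [hv]
  rw [mem_Sk, mem_Sk]
  constructor
  · intro h
    refine ⟨fun u w ha hu hw => h u w ha (Nat.lt_succ_of_lt hu) (Nat.lt_succ_of_lt hw),
      fun u ha hu => h u v ha (Nat.lt_succ_of_lt hu) (by rw [hfv]; exact Nat.lt_succ_self k)⟩
  · rintro ⟨h1, h2⟩ u w ha hu hw
    rcases Nat.lt_succ_iff_lt_or_eq.1 hu with hu' | hu'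
    · rcases Nat.lt_succ_iff_lt_or_eq.1 hw with hw' | hw'
      · exact h1 u w ha hu' hw'
      · have : w = v := by
          apply f.injective; rw [Fin.ext_iff, hfv, hw']
        rw [this] at ha ⊢
        exact h2 u ha hu'
    · have huv : u = v := by
        apply f.injective; rw [Fin.ext_iff, hfv, hu']
      rcases Nat.lt_succ_iff_lt_or_eq.1 hw with hw' | hw'
      · rw [huv] at ha ⊢
        exact (h2 w ha.symm hw').symm
      · have : w = v := by
          apply f.injective; rw [Fin.ext_iff, hfv, hw']
        rw [huv, this] at ha
        exact absurd ha (G.loopless.irrefl v)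
end step

section count
variable {G : SimpleGraph V} {q n : ℕ} {f : V ≃ Fin n}

lemma Sk_step (hq : 0 < q) {k : ℕ} (hk : k < n) :
    (q - backDeg G f (f.symm ⟨k, hk⟩)) * (Sk G q f k).card ≤ q * (Sk G q f (k + 1)).card := by
  classical
  set v := f.symm ⟨k, hk⟩ with hv
  set c0 : Fin q := ⟨0, hq⟩ with hc0
  set π : (V → Fin q) → (V → Fin q) := fun σ => Function.update σ v c0 with hπ
  set T : Finset (V → Fin q) := (Sk G q f k).image π with hT
  have hπmem : ∀ σ ∈ Sk G q f k, π σ ∈ T := fun σ hσ => Finset.mem_image_of_mem π hσ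
  have hsub : ∀ σ ∈ Sk G q f (k+1), σ ∈ Sk G q f k := fun σ hσ => (mem_Sk_succ (hk := hk)).1 hσ |>.1
  -- each τ ∈ T is itself in Sk k and satisfies τ v = c0
  have hTfacts : ∀ τ ∈ T, τ ∈ Sk G q f k ∧ τ v = c0 := by
    intro τ hτ
    rw [hT, Finset.mem_image] at hτ
    obtain ⟨σ, hσ, rfl⟩ := hτ
    exact ⟨update_mem_Sk hσ c0, Function.update_self v c0 σ⟩
  -- fibers of Sk k have cardinality q
  have fiber1 : ∀ τ ∈ T, ((Sk G q f k).filter (fun σ => π σ = τ)).card = q := by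
    intro τ hτ
    obtain ⟨hτSk, hτv⟩ := hTfacts τ hτ
    have himg : (Sk G q f k).filter (fun σ => π σ = τ)
        = Finset.univ.image (fun c : Fin q => Function.update τ v c) := by
      ext σ
      rw [Finset.mem_filter, Finset.mem_image]
      constructor
      · rintro ⟨hσ, hπσ⟩
        refine ⟨σ v, Finset.mem_univ _, ?_⟩
        funext w
        by_cases hw : w = v
        · subst hw; simp
        · rw [Function.update_of_ne hw, ← hπσ, hπ]
          simp [Function.update_of_ne hw]
      · rintro ⟨c, _, rfl⟩
        refine ⟨update_mem_Sk hτSk c, ?_⟩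
        rw [hπ]
        simp only [Function.update_idem]
        rw [← hτv]
        exact Function.update_eq_self v τ
    rw [himg, Finset.card_image_of_injective _ (fun c c' hcc' => by
      have := congrFun hcc' v; simpa using this), Finset.card_univ, Fintype.card_fin]
  -- forbidden colours
  set Fb : (V → Fin q) → Finset (Fin q) :=
    fun τ => ((nbr G v).filter (fun u => (f u).val < k)).image τ with hFb
  have hFbcard : ∀ τ, (Fb τ).card ≤ backDeg G f v := by
    intro τ
    refine le_trans (Finset.card_image_le) (le_of_eq ?_)
    unfold backDeg
    congr 1
    apply Finset.filter_congr
    intro u _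
    have : f v = ⟨k, hk⟩ := by rw [hv]; exact f.apply_symm_apply _
    simp [Fin.lt_def, this]
  have fiber2 : ∀ τ ∈ T, ((Sk G q f (k+1)).filter (fun σ => π σ = τ)).card = q - (Fb τ).card := by
    intro τ hτ
    obtain ⟨hτSk, hτv⟩ := hTfacts τ hτ
    have himg : (Sk G q f (k+1)).filter (fun σ => π σ = τ)
        = (Fb τ)ᶜ.image (fun c : Fin q => Function.update τ v c) := by
      ext σ
      rw [Finset.mem_filter, Finset.mem_image]
      constructor
      · rintro ⟨hσ, hπσ⟩
        have hσk := hsub σ hσ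
        have hσeq : σ = Function.update τ v (σ v) := by
          funext w
          by_cases hw : w = v
          · subst hw; simp
          · rw [Function.update_of_ne hw, ← hπσ, hπ]
            simp [Function.update_of_ne hw]
        refine ⟨σ v, ?_, hσeq.symm⟩
        rw [Finset.mem_compl]
        intro hmem
        rw [hFb, Finset.mem_image] at hmem
        obtain ⟨u, hu, huv⟩ := hmem
        rw [Finset.mem_filter] at hu
        have hune : u ≠ v := (mem_nbr.1 hu.1).ne'
        have : τ u = σ u := by
          rw [← hπσ]; exact Function.update_of_ne hune c0 σ
        rw [this] at huv
        exact ((mem_Sk_succ (hk := hk)).1 hσ).2 u (mem_nbr.1 hu.1).symm hu.2 huv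
      · rintro ⟨c, hc, rfl⟩
        rw [Finset.mem_compl] at hc
        have hmem : Function.update τ v c ∈ Sk G q f (k+1) := by
          rw [mem_Sk_succ (hk := hk)]
          refine ⟨update_mem_Sk hτSk c, ?_⟩
          intro u ha hu
          have hune : u ≠ v := ha.ne
          rw [Function.update_of_ne hune, Function.update_self]
          intro heq
          apply hc
          rw [hFb, Finset.mem_image]
          exact ⟨u, Finset.mem_filter.2 ⟨mem_nbr.2 ha.symm, hu⟩, heq⟩
        refine ⟨hmem, ?_⟩
        rw [hπ]
        simp only [Function.update_idem]
        rw [← hτv]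
        exact Function.update_eq_self v τ
    rw [himg, Finset.card_image_of_injective _ (fun c c' hcc' => by
      have := congrFun hcc' v; simpa using this), Finset.card_compl, Fintype.card_fin]
  -- put it together
  have h1 : (Sk G q f k).card = T.card * q := by
    rw [Finset.card_eq_sum_card_fiberwise hπmem, Finset.sum_congr rfl fiber1,
      Finset.sum_const, smul_eq_mul]
  have h2 : T.card * (q - backDeg G f v) ≤ (Sk G q f (k+1)).card := by
    have hπmem' : ∀ σ ∈ Sk G q f (k+1), π σ ∈ T := fun σ hσ => hπmem σ (hsub σ hσ)
    rw [Finset.card_eq_sum_card_fiberwise hπmem']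
    calc T.card * (q - backDeg G f v) = ∑ _τ ∈ T, (q - backDeg G f v) := by
          rw [Finset.sum_const, smul_eq_mul]
      _ ≤ ∑ τ ∈ T, (q - (Fb τ).card) :=
          Finset.sum_le_sum (fun τ _ => Nat.sub_le_sub_left (hFbcard τ) q)
      _ = ∑ τ ∈ T, ((Sk G q f (k+1)).filter (fun σ => π σ = τ)).card :=
          Finset.sum_congr rfl (fun τ hτ => (fiber2 τ hτ).symm)
  calc (q - backDeg G f v) * (Sk G q f k).card
      = q * (T.card * (q - backDeg G f v)) := by rw [h1]; ring
    _ ≤ q * (Sk G q f (k+1)).card := Nat.mul_le_mul_left q h2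
end count

section greedy
variable {G : SimpleGraph V} {q n : ℕ} {f : V ≃ Fin n}

/-- back-degree reindexed over ℕ -/
def bD (G : SimpleGraph V) {n : ℕ} (f : V ≃ Fin n) (j : ℕ) : ℕ :=
  if h : j < n then backDeg G f (f.symm ⟨j, h⟩) else 0

lemma Sk_zero : (Sk G q f 0).card = q ^ (Fintype.card V) := by
  have : Sk G q f 0 = Finset.univ := by
    apply Finset.eq_univ_of_forall
    intro σ
    rw [mem_Sk]
    intro u w _ hu
    exact absurd hu (Nat.not_lt_zero _)
  rw [this, Finset.card_univ, Fintype.card_fun, Fintype.card_fin]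

lemma Sk_top : Sk G q f n = properFinset G q := by
  ext σ
  rw [mem_Sk, mem_properFinset]
  exact ⟨fun h u w ha => h u w ha (f u).isLt (f w).isLt, fun h u w ha _ _ => h u w ha⟩

lemma greedy_aux (hq : 0 < q) :
    ∀ k ≤ n, (∏ j ∈ Finset.range k, (q - bD G f j)) * q ^ (Fintype.card V)
      ≤ (Sk G q f k).card * q ^ k := by
  intro k
  induction k with
  | zero => intro _; simp [Sk_zero]
  | succ k ih =>
    intro hkn
    have hk : k < n := hkn
    have IH := ih (le_of_lt hk)
    have step := Sk_step (G := G) (f := f) hq hk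
    have hbd : bD G f k = backDeg G f (f.symm ⟨k, hk⟩) := dif_pos hk
    calc (∏ j ∈ Finset.range (k+1), (q - bD G f j)) * q ^ (Fintype.card V)
        = (q - bD G f k) * ((∏ j ∈ Finset.range k, (q - bD G f j)) * q ^ (Fintype.card V)) := by
          rw [Finset.prod_range_succ]; ring
      _ ≤ (q - bD G f k) * ((Sk G q f k).card * q ^ k) :=
          Nat.mul_le_mul_left _ IH
      _ = ((q - backDeg G f (f.symm ⟨k, hk⟩)) * (Sk G q f k).card) * q ^ k := by
          rw [hbd]; ring
      _ ≤ (q * (Sk G q f (k+1)).card) * q ^ k := Nat.mul_le_mul_right _ step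
      _ = (Sk G q f (k+1)).card * q ^ (k+1) := by ring

theorem greedy (G : SimpleGraph V) {q n : ℕ} (hq : 0 < q) (f : V ≃ Fin n) :
    ∏ v, (q - backDeg G f v) ≤ (properFinset G q).card := by
  have hcard : Fintype.card V = n := by
    rw [Fintype.card_congr f, Fintype.card_fin]
  have h := greedy_aux (G := G) (q := q) (f := f) hq n le_rfl
  rw [Sk_top, hcard] at h
  have h2 : ∏ j ∈ Finset.range n, (q - bD G f j) ≤ (properFinset G q).card :=
    Nat.le_of_mul_le_mul_right h (Nat.pow_pos hq)
  calc ∏ v, (q - backDeg G f v)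
      = ∏ i : Fin n, (q - backDeg G f (f.symm i)) := (Equiv.prod_comp f.symm _).symm
    _ = ∏ j ∈ Finset.range n, (q - bD G f j) := by
        rw [← Fin.prod_univ_eq_prod_range (fun j => q - bD G f j) n]
        apply Finset.prod_congr rfl
        intro i _
        congr 1
        rw [bD, dif_pos i.isLt]
    _ ≤ (properFinset G q).card := h2
end greedy

section rot

/-- the cyclic permutation on a 5-element finset of `Fin n` (identity otherwise) -/
def cyc {n : ℕ} (P : Finset (Fin n)) : Equiv.Perm (Fin n) :=
  if h : P.card = 5 then
    Equiv.Perm.extendDomain (finRotate 5) (P.orderIsoOfFin h).toEquiv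
  else 1

variable {n : ℕ} {P : Finset (Fin n)}

lemma cyc_apply_mem (h : P.card = 5) {x : Fin n} (hx : x ∈ P) :
    cyc P x = ↑((P.orderIsoOfFin h) (finRotate 5 ((P.orderIsoOfFin h).symm ⟨x, hx⟩))) := by
  rw [cyc, dif_pos h]
  exact Equiv.Perm.extendDomain_apply_subtype _ _ hx

lemma cyc_mem (h : P.card = 5) {x : Fin n} (hx : x ∈ P) : cyc P x ∈ P := by
  rw [cyc_apply_mem h hx]
  exact ((P.orderIsoOfFin h) _).2

lemma cyc_image (h : P.card = 5) : P.image (cyc P) = P := by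
  apply Finset.eq_of_subset_of_card_le
  · intro y hy
    rw [Finset.mem_image] at hy
    obtain ⟨x, hx, rfl⟩ := hy
    exact cyc_mem h hx
  · rw [Finset.card_image_of_injective _ (cyc P).injective]

lemma cyc_symm_mem (h : P.card = 5) {x : Fin n} (hx : x ∈ P) : (cyc P).symm x ∈ P := by
  have hx' : x ∈ P.image (cyc P) := by rw [cyc_image h]; exact hx
  rw [Finset.mem_image] at hx'
  obtain ⟨y, hy, rfl⟩ := hx'
  rw [Equiv.symm_apply_apply]
  exact hy

lemma cyc_symm_image (h : P.card = 5) : P.image (cyc P).symm = P := by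
  apply Finset.eq_of_subset_of_card_le
  · intro y hy
    rw [Finset.mem_image] at hy
    obtain ⟨x, hx, rfl⟩ := hy
    exact cyc_symm_mem h hx
  · rw [Finset.card_image_of_injective _ (cyc P).symm.injective]

/-- number of elements of `P` below `x ∈ P` equals the index of `x` -/
lemma card_filter_lt_eq_idx (h : P.card = 5) {x : Fin n} (hx : x ∈ P) :
    (P.filter (fun y => y < x)).card = ((P.orderIsoOfFin h).symm ⟨x, hx⟩ : Fin 5).val := by
  set e := P.orderIsoOfFin h with he
  set i := e.symm ⟨x, hx⟩ with hi
  have hei : (e i : Fin n) = x := by rw [hi]; exact congrArg _ (e.apply_symm_apply ⟨x, hx⟩)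
  have himg : P.filter (fun y => y < x) = (Finset.Iio i).image (fun j => (e j : Fin n)) := by
    ext y
    rw [Finset.mem_filter, Finset.mem_image]
    constructor
    · rintro ⟨hy, hyx⟩
      refine ⟨e.symm ⟨y, hy⟩, ?_, congrArg _ (e.apply_symm_apply ⟨y, hy⟩)⟩
      rw [Finset.mem_Iio, hi]
      exact e.symm.lt_iff_lt.2 (Subtype.mk_lt_mk.2 hyx)
    · rintro ⟨j, hj, rfl⟩
      rw [Finset.mem_Iio] at hj
      refine ⟨(e j).2, ?_⟩
      rw [← hei]
      exact Subtype.coe_lt_coe.2 (e.lt_iff_lt.2 hj)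
  rw [himg, Finset.card_image_of_injective _ (fun a b hab => e.injective (Subtype.ext hab)),
    Fin.card_Iio]

end rot

section rankrot
variable {G : SimpleGraph V} {n : ℕ} {v : V}

/-- the closed neighbourhood -/
def cnbr (G : SimpleGraph V) (v : V) : Finset V := insert v (nbr G v)

lemma v_not_mem_nbr : v ∉ nbr G v := fun h => G.loopless.irrefl v (mem_nbr.1 h)

lemma cnbr_card (hdeg : (nbr G v).card = 4) : (cnbr G v).card = 5 := by
  rw [cnbr, Finset.card_insert_of_notMem v_not_mem_nbr, hdeg]

lemma image_cnbr_card (hdeg : (nbr G v).card = 4) (f : V ≃ Fin n) :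
    ((cnbr G v).image f).card = 5 := by
  rw [Finset.card_image_of_injective _ f.injective, cnbr_card hdeg]

lemma fv_mem_image (f : V ≃ Fin n) : f v ∈ (cnbr G v).image f :=
  Finset.mem_image_of_mem f (Finset.mem_insert_self v _)

/-- back-degree equals the number of elements of the image of the closed
neighbourhood lying below `f v` -/
lemma backDeg_eq_filter_image (f : V ≃ Fin n) :
    backDeg G f v = (((cnbr G v).image f).filter (fun y => y < f v)).card := by
  rw [Finset.filter_image]
  rw [Finset.card_image_of_injective _ f.injective]
  unfold backDeg cnbr
  congr 1
  rw [Finset.filter_insert, if_neg (lt_irrefl (f v))]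

/-- back-degree equals the index of `f v` in the image of the closed neighbourhood -/
lemma backDeg_eq_idx (hdeg : (nbr G v).card = 4) (f : V ≃ Fin n) :
    backDeg G f v =
      ((((cnbr G v).image f).orderIsoOfFin (image_cnbr_card hdeg f)).symm
        ⟨f v, fv_mem_image f⟩ : Fin 5).val := by
  rw [backDeg_eq_filter_image]
  exact card_filter_lt_eq_idx (image_cnbr_card hdeg f) (fv_mem_image f)

/-- rotate the ordering `f` cyclically on the closed neighbourhood of `v` -/
def rotOrd (G : SimpleGraph V) (v : V) {n : ℕ} (f : V ≃ Fin n) : V ≃ Fin n :=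
  f.trans (cyc ((cnbr G v).image f))

def rotOrdInv (G : SimpleGraph V) (v : V) {n : ℕ} (f : V ≃ Fin n) : V ≃ Fin n :=
  f.trans (cyc ((cnbr G v).image f)).symm

lemma image_rotOrd (hdeg : (nbr G v).card = 4) (f : V ≃ Fin n) :
    (cnbr G v).image (rotOrd G v f) = (cnbr G v).image f := by
  have : (cnbr G v).image (rotOrd G v f)
      = ((cnbr G v).image f).image (cyc ((cnbr G v).image f)) := by
    rw [Finset.image_image]; rfl
  rw [this, cyc_image (image_cnbr_card hdeg f)]

lemma image_rotOrdInv (hdeg : (nbr G v).card = 4) (f : V ≃ Fin n) :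
    (cnbr G v).image (rotOrdInv G v f) = (cnbr G v).image f := by
  have : (cnbr G v).image (rotOrdInv G v f)
      = ((cnbr G v).image f).image ((cyc ((cnbr G v).image f)).symm) := by
    rw [Finset.image_image]; rfl
  rw [this, cyc_symm_image (image_cnbr_card hdeg f)]

lemma rotOrdInv_rotOrd (hdeg : (nbr G v).card = 4) (f : V ≃ Fin n) :
    rotOrdInv G v (rotOrd G v f) = f := by
  rw [rotOrdInv, image_rotOrd hdeg, rotOrd, Equiv.trans_assoc, Equiv.self_trans_symm,
    Equiv.trans_refl]

lemma rotOrd_rotOrdInv (hdeg : (nbr G v).card = 4) (f : V ≃ Fin n) :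
    rotOrd G v (rotOrdInv G v f) = f := by
  rw [rotOrd, image_rotOrdInv hdeg, rotOrdInv, Equiv.trans_assoc, Equiv.symm_trans_self,
    Equiv.trans_refl]

lemma rotOrd_bijective (hdeg : (nbr G v).card = 4) :
    Function.Bijective (rotOrd G v : (V ≃ Fin n) → (V ≃ Fin n)) :=
  Function.bijective_iff_has_inverse.2
    ⟨rotOrdInv G v, rotOrdInv_rotOrd hdeg, rotOrd_rotOrdInv hdeg⟩

/-- the key rank-rotation identity -/
lemma backDeg_rotOrd (hdeg : (nbr G v).card = 4) (f : V ≃ Fin n) :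
    backDeg G (rotOrd G v f) v = (backDeg G f v + 1) % 5 := by
  set P := (cnbr G v).image f with hP
  have hPcard : P.card = 5 := image_cnbr_card hdeg f
  set e := P.orderIsoOfFin hPcard with he
  set i : Fin 5 := e.symm ⟨f v, fv_mem_image f⟩ with hi
  -- image of f v under the rotation
  have hgv : (rotOrd G v f) v = ↑(e (finRotate 5 i)) := by
    rw [rotOrd]
    show cyc P (f v) = _
    rw [cyc_apply_mem hPcard (fv_mem_image f)]
  -- the new back-degree is the index of the new position
  have h1 : backDeg G (rotOrd G v f) v
      = ((P.filter (fun y => y < (rotOrd G v f) v)).card) := by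
    rw [backDeg_eq_filter_image, image_rotOrd hdeg]
  have hmem : (rotOrd G v f) v ∈ P := by
    rw [hgv]; exact (e (finRotate 5 i)).2
  rw [h1, card_filter_lt_eq_idx hPcard hmem]
  have hidx : e.symm ⟨(rotOrd G v f) v, hmem⟩ = finRotate 5 i := by
    apply e.injective
    rw [e.apply_symm_apply]
    exact Subtype.ext hgv
  rw [hidx]
  have hold : backDeg G f v = i.val := backDeg_eq_idx hdeg f
  rw [hold, finRotate_succ_apply, Fin.val_add]
  norm_num
end rankrot

section average
variable {G : SimpleGraph V} {n : ℕ} {v : V}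

lemma sum_shift (g : ZMod 5 → ℝ) (hdeg : (nbr G v).card = 4) :
    ∑ f : V ≃ Fin n, g ((backDeg G f v : ZMod 5) + 1)
      = ∑ f : V ≃ Fin n, g ((backDeg G f v : ZMod 5)) := by
  have key : ∀ f : V ≃ Fin n,
      ((backDeg G (rotOrd G v f) v : ZMod 5)) = (backDeg G f v : ZMod 5) + 1 := by
    intro f
    rw [backDeg_rotOrd hdeg, ZMod.natCast_mod]
    push_cast
    ring
  calc ∑ f : V ≃ Fin n, g ((backDeg G f v : ZMod 5) + 1)
      = ∑ f : V ≃ Fin n, g ((backDeg G (rotOrd G v f) v : ZMod 5)) := by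
        exact Finset.sum_congr rfl (fun f _ => by rw [key f])
    _ = ∑ f : V ≃ Fin n, g ((backDeg G f v : ZMod 5)) :=
        Fintype.sum_bijective (rotOrd G v) (rotOrd_bijective hdeg) _ _ (fun f => rfl)

lemma sum_shift_nat (g : ZMod 5 → ℝ) (hdeg : (nbr G v).card = 4) (m : ℕ) :
    ∑ f : V ≃ Fin n, g ((backDeg G f v : ZMod 5) + (m : ZMod 5))
      = ∑ f : V ≃ Fin n, g ((backDeg G f v : ZMod 5)) := by
  induction m with
  | zero => simp
  | succ m ih =>
    have := sum_shift (g := fun x => g (x + (m : ZMod 5))) (n := n) hdeg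
    calc ∑ f : V ≃ Fin n, g ((backDeg G f v : ZMod 5) + ((m + 1 : ℕ) : ZMod 5))
        = ∑ f : V ≃ Fin n, g (((backDeg G f v : ZMod 5) + 1) + (m : ZMod 5)) := by
          apply Finset.sum_congr rfl
          intro f _
          congr 1
          push_cast
          ring
      _ = ∑ f : V ≃ Fin n, g ((backDeg G f v : ZMod 5) + (m : ZMod 5)) := this
      _ = _ := ih

lemma sum_shift_all (g : ZMod 5 → ℝ) (hdeg : (nbr G v).card = 4) (c : ZMod 5) :
    ∑ f : V ≃ Fin n, g ((backDeg G f v : ZMod 5) + c)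
      = ∑ f : V ≃ Fin n, g ((backDeg G f v : ZMod 5)) := by
  have : ((c.val : ℕ) : ZMod 5) = c := ZMod.natCast_rightInverse c
  rw [← this]
  exact sum_shift_nat g hdeg c.val

/-- per-vertex averaging identity -/
lemma vertex_avg (g : ZMod 5 → ℝ) (hdeg : (nbr G v).card = 4) :
    (5 : ℝ) * ∑ f : V ≃ Fin n, g ((backDeg G f v : ZMod 5))
      = (Fintype.card (V ≃ Fin n) : ℝ) * ∑ c : ZMod 5, g c := by
  have swap : ∑ c : ZMod 5, ∑ f : V ≃ Fin n, g ((backDeg G f v : ZMod 5) + c)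
      = ∑ f : V ≃ Fin n, ∑ c : ZMod 5, g ((backDeg G f v : ZMod 5) + c) :=
    Finset.sum_comm
  have inner : ∀ f : V ≃ Fin n,
      ∑ c : ZMod 5, g ((backDeg G f v : ZMod 5) + c) = ∑ c : ZMod 5, g c := by
    intro f
    exact Fintype.sum_equiv (Equiv.addLeft ((backDeg G f v : ZMod 5))) _ _ (fun c => rfl)
  have lhs : ∑ c : ZMod 5, ∑ f : V ≃ Fin n, g ((backDeg G f v : ZMod 5) + c)
      = (5 : ℝ) * ∑ f : V ≃ Fin n, g ((backDeg G f v : ZMod 5)) := by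
    rw [Finset.sum_congr rfl (fun c _ => sum_shift_all g hdeg c), Finset.sum_const]
    have : (Finset.univ : Finset (ZMod 5)).card = 5 := by decide
    rw [this]
    push_cast
    ring
  rw [← lhs, swap, Finset.sum_congr rfl (fun f _ => inner f), Finset.sum_const]
  rw [nsmul_eq_mul, Finset.card_univ]
end average



section final
variable {G : SimpleGraph V} {q : ℕ}

lemma gq_cast (q : ℕ) {b : ℕ} (hb : b < 5) :
    Real.log ((q - ((b : ZMod 5)).val : ℕ) : ℝ) = Real.log ((q - b : ℕ) : ℝ) := by
  rw [ZMod.val_cast_of_lt hb]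

lemma sum_zmod_eq_range (q : ℕ) :
    ∑ c : ZMod 5, Real.log ((q - c.val : ℕ) : ℝ)
      = ∑ k ∈ Finset.range 5, Real.log ((q - k : ℕ) : ℝ) := by
  refine Finset.sum_nbij' (fun c => c.val) (fun k => (k : ZMod 5)) ?_ ?_ ?_ ?_ ?_
  · intro c _; exact Finset.mem_range.2 (ZMod.val_lt c)
  · intro k _; exact Finset.mem_univ _
  · intro c _; exact ZMod.natCast_rightInverse c
  · intro k hk; exact ZMod.val_cast_of_lt (Finset.mem_range.1 hk)
  · intro c _; rfl

lemma backDeg_le (f : V ≃ Fin n) (v : V) : backDeg G f v ≤ (nbr G v).card :=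
  Finset.card_filter_le _ _

lemma exists_good_order (hG4 : ∀ v, (nbr G v).card = 4) (q : ℕ) :
    ∃ f : V ≃ Fin (Fintype.card V),
      (Fintype.card V : ℝ) * ((∑ k ∈ Finset.range 5, Real.log ((q - k : ℕ) : ℝ)) / 5)
        ≤ ∑ v, Real.log ((q - backDeg G f v : ℕ) : ℝ) := by
  classical
  set n := Fintype.card V
  set Sc := ∑ k ∈ Finset.range 5, Real.log ((q - k : ℕ) : ℝ) with hSc
  set gq : ZMod 5 → ℝ := fun c => Real.log ((q - c.val : ℕ) : ℝ) with hgq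
  have hScsum : ∑ c : ZMod 5, gq c = Sc := sum_zmod_eq_range q
  set N := Fintype.card (V ≃ Fin n) with hN
  -- the total sum over all orderings
  have key : ∀ v : V, ∑ f : V ≃ Fin n, Real.log ((q - backDeg G f v : ℕ) : ℝ)
      = (N : ℝ) * (Sc / 5) := by
    intro v
    have h5 := vertex_avg (n := n) gq (hG4 v)
    rw [hScsum] at h5
    have hterm : ∀ f : V ≃ Fin n,
        gq ((backDeg G f v : ZMod 5)) = Real.log ((q - backDeg G f v : ℕ) : ℝ) := by
      intro f
      apply gq_cast
      exact lt_of_le_of_lt (le_trans (backDeg_le f v) (le_of_eq (hG4 v))) (by norm_num)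
    rw [← Finset.sum_congr rfl (fun f _ => hterm f)]
    linarith
  have total : ∑ f : V ≃ Fin n, ∑ v, Real.log ((q - backDeg G f v : ℕ) : ℝ)
      = ∑ f : V ≃ Fin n, (n : ℝ) * (Sc / 5) := by
    rw [Finset.sum_comm, Finset.sum_congr rfl (fun v _ => key v), Finset.sum_const,
      Finset.sum_const, Finset.card_univ, Finset.card_univ]
    rw [nsmul_eq_mul, nsmul_eq_mul, ← hN]
    have : Fintype.card V = n := rfl
    rw [this]
    ring
  have hne : (Finset.univ : Finset (V ≃ Fin n)).Nonempty :=
    ⟨Fintype.equivFin V, Finset.mem_univ _⟩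
  obtain ⟨f, _, hf⟩ := Finset.exists_le_of_sum_le hne (le_of_eq total.symm)
  exact ⟨f, hf⟩

lemma properCount_eq_card (G : SimpleGraph V) (q : ℕ) :
    properCount G q = (properFinset G q).card := by
  rw [properCount]
  have : {σ : V → Fin q | ∀ u v, G.Adj u v → σ u ≠ σ v} = ↑(properFinset G q) := by
    ext σ
    simp only [Set.mem_setOf_eq, Finset.coe_filter, mem_properFinset]
    rw [Finset.mem_coe, mem_properFinset]
  rw [this, Set.ncard_coe_finset]

lemma nbr_card_of_regular (hG : IsRegularGraph G 4) (v : V) : (nbr G v).card = 4 := by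
  have : G.neighborSet v = ↑(nbr G v) := by
    ext u
    rw [SimpleGraph.mem_neighborSet, Finset.mem_coe, mem_nbr]
  have h := hG v
  rw [this, Set.ncard_coe_finset] at h
  exact h

lemma properCount_K5 (q : ℕ) : properCount K5 q = q.descFactorial 5 := by
  rw [properCount]
  have hset : {σ : Fin 5 → Fin q | ∀ u v, K5.Adj u v → σ u ≠ σ v}
      = {σ : Fin 5 → Fin q | Function.Injective σ} := by
    ext σ
    simp only [Set.mem_setOf_eq]
    constructor
    · intro h a b hab
      by_contra hne
      exact h a b (by simpa [K5] using hne) hab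
    · intro h a b hadj heq
      exact (by simpa [K5] using hadj : a ≠ b) (h heq)
  have hcongr : Nat.card {σ : Fin 5 → Fin q | Function.Injective σ}
      = Nat.card (Fin 5 ↪ Fin q) :=
    Nat.card_congr (Equiv.subtypeInjectiveEquivEmbedding (Fin 5) (Fin q))
  rw [hset, ← Nat.card_coe_set_eq, hcongr, Nat.card_eq_fintype_card,
    Fintype.card_embedding_eq, Fintype.card_fin, Fintype.card_fin]
end final

end Aux

theorem stmt8 {V : Type*} [Fintype V] [DecidableEq V] [Nonempty V]
    (G : SimpleGraph V) (hG : IsRegularGraph G 4) (q : ℕ) (hq : 5 ≤ q) :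
    (1 / 5 : ℝ) * Real.log (properCount K5 q) ≤
      (1 / (Fintype.card V : ℝ)) * Real.log (properCount G q) := by
  classical
  have hn0 : 0 < Fintype.card V := Fintype.card_pos
  have hq0 : 0 < q := by omega
  have hG4 : ∀ v, (nbr G v).card = 4 := nbr_card_of_regular hG
  obtain ⟨f, hf⟩ := exists_good_order hG4 q
  set Sc := ∑ k ∈ Finset.range 5, Real.log ((q - k : ℕ) : ℝ) with hSc
  have hfac : ∀ v : V, 1 ≤ q - backDeg G f v := by
    intro v
    have h4 : backDeg G f v ≤ 4 := (backDeg_le f v).trans (le_of_eq (hG4 v))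
    omega
  -- greedy bound
  have hgreedy : ∏ v, (q - backDeg G f v) ≤ properCount G q := by
    rw [properCount_eq_card]; exact greedy G hq0 f
  have hprodpos : 0 < ∏ v, (q - backDeg G f v) :=
    Finset.prod_pos (fun v _ => hfac v)
  have hlogprod : Real.log ((∏ v, (q - backDeg G f v) : ℕ) : ℝ)
      = ∑ v, Real.log ((q - backDeg G f v : ℕ) : ℝ) := by
    rw [Nat.cast_prod]
    exact Real.log_prod (fun v _ => by
      have := hfac v
      positivity)
  have h2 : (Fintype.card V : ℝ) * (Sc / 5) ≤ Real.log (properCount G q) := by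
    calc (Fintype.card V : ℝ) * (Sc / 5)
        ≤ ∑ v, Real.log ((q - backDeg G f v : ℕ) : ℝ) := hf
      _ = Real.log ((∏ v, (q - backDeg G f v) : ℕ) : ℝ) := hlogprod.symm
      _ ≤ Real.log (properCount G q) :=
          Real.log_le_log (by exact_mod_cast hprodpos) (by exact_mod_cast hgreedy)
  have hK5log : Real.log (properCount K5 q) = Sc := by
    rw [properCount_K5, Nat.descFactorial_eq_prod_range, Nat.cast_prod]
    rw [Real.log_prod]
    intro k hk
    have hk5 : k < 5 := Finset.mem_range.1 hk
    have : 1 ≤ q - k := by omega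
    positivity
  rw [hK5log]
  have hnR : (0 : ℝ) < (Fintype.card V : ℝ) := by exact_mod_cast hn0
  calc (1 / 5 : ℝ) * Sc
      = (1 / (Fintype.card V : ℝ)) * ((Fintype.card V : ℝ) * (Sc / 5)) := by
        field_simp
    _ ≤ (1 / (Fintype.card V : ℝ)) * Real.log (properCount G q) :=
        mul_le_mul_of_nonneg_left h2 (by positivity)
end
end
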